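/- Let H be a graph and R ⊆ V(H) an independent set of H. Suppose H₁ is a proper induced subgraph of H containing R, and let H₂ := H with the edges of H₁ removed. Then the maximum rooted 2-density satisfies m₂(H,R) ≤ max{ m₂(H₁,R), m₂(H₂,V(H₁)) }. -/

import Mathlib

open Finset

variable {V : Type} [Fintype V]

/-- The maximum rooted density `m(H,R)`. -/
noncomputable def rootedDensity (H : SimpleGraph V) (R : Set V) : ℝ :=
  sSup {x : ℝ | ∃ H' : H.Subgraph, (H'.verts \ R).Nonempty ∧
    x = (H'.edgeSet.ncard : ℝ) / ((H'.verts \ R).ncard : ℝ)}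

/-- The maximum 2-density `m₂(H)`. -/
noncomputable def density2 (H : SimpleGraph V) : ℝ :=
  sSup {x : ℝ | ∃ H' : H.Subgraph, 3 ≤ H'.verts.ncard ∧
    x = ((H'.edgeSet.ncard : ℝ) - 1) / ((H'.verts.ncard : ℝ) - 2)}

/-- The maximum rooted 2-density `m₂(H,R) := max { m(H,R), m₂(H) }`. -/
noncomputable def rootedDensity2 (H : SimpleGraph V) (R : Set V) : ℝ :=
  max (rootedDensity H R) (density2 H)

/-- The induced subgraph of `H` on a vertex subset `S`. -/
def inducedOn (H : SimpleGraph V) (S : Set V) : SimpleGraph V where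
  Adj u v := H.Adj u v ∧ u ∈ S ∧ v ∈ S
  symm := ⟨fun u v h => ⟨h.1.symm, h.2.2, h.2.1⟩⟩
  loopless := ⟨fun u h => H.loopless.irrefl u h.1⟩

/-- The graph `H` with all edges inside `S` removed. -/
def removeWithin (H : SimpleGraph V) (S : Set V) : SimpleGraph V where
  Adj u v := H.Adj u v ∧ ¬(u ∈ S ∧ v ∈ S)
  symm := ⟨fun u v h => ⟨h.1.symm, fun hc => h.2 ⟨hc.2, hc.1⟩⟩⟩
  loopless := ⟨fun u h => H.loopless.irrefl u h.1⟩

instance subgraph_finite (G : SimpleGraph V) : Finite G.Subgraph := by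
  classical
  have hinj : Function.Injective (fun H' : G.Subgraph => (H'.verts, H'.Adj)) := by
    intro a b h
    simp only [Prod.mk.injEq] at h
    exact SimpleGraph.Subgraph.ext h.1 h.2
  exact Finite.of_injective _ hinj

lemma bddAbove_rootedSet (G : SimpleGraph V) (R : Set V) :
    BddAbove {x : ℝ | ∃ H' : G.Subgraph, (H'.verts \ R).Nonempty ∧
      x = (H'.edgeSet.ncard : ℝ) / ((H'.verts \ R).ncard : ℝ)} := by
  apply Set.Finite.bddAbove
  apply (Set.finite_range (fun H' : G.Subgraph =>
    (H'.edgeSet.ncard : ℝ) / ((H'.verts \ R).ncard : ℝ))).subset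
  rintro x ⟨H', -, rfl⟩
  exact ⟨H', rfl⟩

lemma bddAbove_density2Set (G : SimpleGraph V) :
    BddAbove {x : ℝ | ∃ H' : G.Subgraph, 3 ≤ H'.verts.ncard ∧
      x = ((H'.edgeSet.ncard : ℝ) - 1) / ((H'.verts.ncard : ℝ) - 2)} := by
  apply Set.Finite.bddAbove
  apply (Set.finite_range (fun H' : G.Subgraph =>
    ((H'.edgeSet.ncard : ℝ) - 1) / ((H'.verts.ncard : ℝ) - 2))).subset
  rintro x ⟨H', -, rfl⟩
  exact ⟨H', rfl⟩

lemma le_rootedDensity (G : SimpleGraph V) (R : Set V) (F : G.Subgraph)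
    (h : (F.verts \ R).Nonempty) :
    (F.edgeSet.ncard : ℝ) / ((F.verts \ R).ncard : ℝ) ≤ rootedDensity G R :=
  le_csSup (bddAbove_rootedSet G R) ⟨F, h, rfl⟩

lemma le_density2 (G : SimpleGraph V) (F : G.Subgraph) (h : 3 ≤ F.verts.ncard) :
    ((F.edgeSet.ncard : ℝ) - 1) / ((F.verts.ncard : ℝ) - 2) ≤ density2 G :=
  le_csSup (bddAbove_density2Set G) ⟨F, h, rfl⟩

lemma rootedDensity_nonneg (G : SimpleGraph V) (R : Set V) : 0 ≤ rootedDensity G R := by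
  apply Real.sSup_nonneg
  rintro x ⟨H', -, rfl⟩
  positivity

/-- The subgraph of `inducedOn H S` consisting of the edges of `F` inside `S`. -/
def innerSub (H : SimpleGraph V) (S : Set V) (F : H.Subgraph) : (inducedOn H S).Subgraph where
  verts := F.verts ∩ S
  Adj u v := F.Adj u v ∧ u ∈ S ∧ v ∈ S
  adj_sub h := ⟨F.adj_sub h.1, h.2⟩
  edge_vert h := ⟨F.edge_vert h.1, h.2.1⟩
  symm := ⟨fun u v h => ⟨F.adj_symm h.1, h.2.2, h.2.1⟩⟩

/-- The subgraph of `removeWithin H S` consisting of the edges of `F` not inside `S`. -/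
def outerSub (H : SimpleGraph V) (S : Set V) (F : H.Subgraph) : (removeWithin H S).Subgraph where
  verts := F.verts
  Adj u v := F.Adj u v ∧ ¬(u ∈ S ∧ v ∈ S)
  adj_sub h := ⟨F.adj_sub h.1, h.2⟩
  edge_vert h := F.edge_vert h.1
  symm := ⟨fun u v h => ⟨F.adj_symm h.1, fun hc => h.2 ⟨hc.2, hc.1⟩⟩⟩

lemma edge_ncard_split (H : SimpleGraph V) (S : Set V) (F : H.Subgraph) :
    (innerSub H S F).edgeSet.ncard + (outerSub H S F).edgeSet.ncard = F.edgeSet.ncard := by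
  classical
  have hdisj : Disjoint (innerSub H S F).edgeSet (outerSub H S F).edgeSet := by
    rw [Set.disjoint_left]
    intro e h1 h2
    induction e with
    | h u v =>
      rw [SimpleGraph.Subgraph.mem_edgeSet] at h1 h2
      exact h2.2 h1.2
  rw [← Set.ncard_union_eq hdisj]
  congr 1
  ext e
  induction e with
  | h u v =>
    simp only [Set.mem_union, SimpleGraph.Subgraph.mem_edgeSet]
    show (F.Adj u v ∧ _) ∨ (F.Adj u v ∧ _) ↔ F.Adj u v
    tauto

lemma outer_edge_le (H : SimpleGraph V) (S : Set V) (F : H.Subgraph) :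
    ((outerSub H S F).edgeSet.ncard : ℝ) ≤
      rootedDensity (removeWithin H S) S * ((F.verts \ S).ncard : ℝ) := by
  by_cases hn : (F.verts \ S).ncard = 0
  · have hempty : F.verts \ S = ∅ := by rwa [Set.ncard_eq_zero] at hn
    have hsub : F.verts ⊆ S := by
      intro x hx
      by_contra hxS
      exact absurd hempty (Set.nonempty_iff_ne_empty.1 ⟨x, hx, hxS⟩)
    have : (outerSub H S F).edgeSet = ∅ := by
      ext e
      induction e with
      | h u v =>
        simp only [SimpleGraph.Subgraph.mem_edgeSet, Set.mem_empty_iff_false, iff_false]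
        rintro ⟨hadj, hns⟩
        exact hns ⟨hsub (F.edge_vert hadj), hsub (F.edge_vert (F.adj_symm hadj))⟩
    rw [this, hn]
    simp
  · have hpos : (0:ℝ) < ((F.verts \ S).ncard : ℝ) := by
      exact_mod_cast Nat.pos_of_ne_zero hn
    have hne : ((outerSub H S F).verts \ S).Nonempty := Set.nonempty_of_ncard_ne_zero hn
    have := le_rootedDensity (removeWithin H S) S (outerSub H S F) hne
    have hverts : (outerSub H S F).verts = F.verts := rfl
    rw [hverts] at this
    rw [div_le_iff₀ hpos] at this
    linarith
lemma inner_edge_le (H : SimpleGraph V) (R S : Set V)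
    (hindep : ∀ u ∈ R, ∀ v ∈ R, ¬H.Adj u v) (F : H.Subgraph) :
    ((innerSub H S F).edgeSet.ncard : ℝ) ≤
      rootedDensity (inducedOn H S) R * (((F.verts ∩ S) \ R).ncard : ℝ) := by
  by_cases hn : ((F.verts ∩ S) \ R).ncard = 0
  · have hempty : (F.verts ∩ S) \ R = ∅ := by rwa [Set.ncard_eq_zero] at hn
    have hsub : F.verts ∩ S ⊆ R := by
      intro x hx
      by_contra hxR
      exact absurd hempty (Set.nonempty_iff_ne_empty.1 ⟨x, hx, hxR⟩)
    have : (innerSub H S F).edgeSet = ∅ := by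
      ext e
      induction e with
      | h u v =>
        simp only [SimpleGraph.Subgraph.mem_edgeSet, Set.mem_empty_iff_false, iff_false]
        rintro ⟨hadj, huS, hvS⟩
        exact hindep u (hsub ⟨F.edge_vert hadj, huS⟩)
          v (hsub ⟨F.edge_vert (F.adj_symm hadj), hvS⟩) (F.adj_sub hadj)
    rw [this, hn]
    simp
  · have hpos : (0:ℝ) < (((F.verts ∩ S) \ R).ncard : ℝ) := by
      exact_mod_cast Nat.pos_of_ne_zero hn
    have hne : ((innerSub H S F).verts \ R).Nonempty := Set.nonempty_of_ncard_ne_zero hn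
    have := le_rootedDensity (inducedOn H S) R (innerSub H S F) hne
    have hverts : (innerSub H S F).verts = F.verts ∩ S := rfl
    rw [hverts] at this
    rw [div_le_iff₀ hpos] at this
    linarith

lemma mediant_le (a b c d M : ℝ) (hc : 0 ≤ c) (hd : 0 ≤ d) (hcd : 0 < c + d)
    (h1 : a ≤ M * c) (h2 : b ≤ M * d) : (a + b) / (c + d) ≤ M := by
  rw [div_le_iff₀ hcd]
  nlinarith

/-- If `R` is an independent set of `H`, `H₁` is a proper induced subgraph of `H`
(on vertex set `S`) containing `R`, and `H₂ = H` minus the edges of `H₁`, then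
`m₂(H,R) ≤ max { m₂(H₁,R), m₂(H₂, V(H₁)) }`. -/
theorem rootedDensity2_concatenate (H : SimpleGraph V) (R S : Set V)
    (hindep : ∀ u ∈ R, ∀ v ∈ R, ¬H.Adj u v)
    (hRS : R ⊆ S) (hproper : S ≠ Set.univ) :
    rootedDensity2 H R ≤
      max (rootedDensity2 (inducedOn H S) R) (rootedDensity2 (removeWithin H S) S) := by
  classical
  set M := max (rootedDensity2 (inducedOn H S) R) (rootedDensity2 (removeWithin H S) S) with hM
  have hM0 : 0 ≤ M :=
    le_trans (rootedDensity_nonneg (inducedOn H S) R)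
      (le_trans (le_max_left _ _) (le_max_left _ _))
  have hM1r : rootedDensity (inducedOn H S) R ≤ M :=
    le_trans (le_max_left _ _) (le_max_left _ _)
  have hM1d : density2 (inducedOn H S) ≤ M :=
    le_trans (le_max_right _ _) (le_max_left _ _)
  have hM2r : rootedDensity (removeWithin H S) S ≤ M :=
    le_trans (le_max_left _ _) (le_max_right _ _)
  have hM2d : density2 (removeWithin H S) ≤ M :=
    le_trans (le_max_right _ _) (le_max_right _ _)
  rw [rootedDensity2]
  apply max_le
  · -- rooted density part
    apply Real.sSup_le _ hM0
    rintro x ⟨F, hne, rfl⟩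
    -- split vertices
    have hvsplit : ((F.verts \ R) : Set V) = ((F.verts ∩ S) \ R) ∪ (F.verts \ S) := by
      ext y
      constructor
      · rintro ⟨hF, hR⟩
        by_cases hS : y ∈ S
        · exact Or.inl ⟨⟨hF, hS⟩, hR⟩
        · exact Or.inr ⟨hF, hS⟩
      · rintro (⟨⟨h1, _⟩, h3⟩ | ⟨h1, h2⟩)
        · exact ⟨h1, h3⟩
        · exact ⟨h1, fun hr => h2 (hRS hr)⟩
    have hdisj : Disjoint ((F.verts ∩ S) \ R) (F.verts \ S) := by
      rw [Set.disjoint_left]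
      rintro y ⟨⟨-, hyS⟩, -⟩ ⟨-, hyS'⟩
      exact hyS' hyS
    have hncard : (F.verts \ R).ncard = ((F.verts ∩ S) \ R).ncard + (F.verts \ S).ncard := by
      rw [hvsplit, Set.ncard_union_eq hdisj]
    have hesplit := edge_ncard_split H S F
    have h1 := le_trans (inner_edge_le H R S hindep F)
      (mul_le_mul_of_nonneg_right hM1r (Nat.cast_nonneg _))
    have h2 := le_trans (outer_edge_le H S F)
      (mul_le_mul_of_nonneg_right hM2r (Nat.cast_nonneg _))
    have hdenpos : (0:ℝ) < (((F.verts ∩ S) \ R).ncard : ℝ) + ((F.verts \ S).ncard : ℝ) := by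
      have : (F.verts \ R).ncard ≠ 0 := by
        intro h0
        exact absurd (by rwa [Set.ncard_eq_zero] at h0) (Set.nonempty_iff_ne_empty.1 hne)
      have : 0 < (F.verts \ R).ncard := Nat.pos_of_ne_zero this
      rw [hncard] at this
      exact_mod_cast this
    calc (F.edgeSet.ncard : ℝ) / ((F.verts \ R).ncard : ℝ)
        = (((innerSub H S F).edgeSet.ncard : ℝ) + ((outerSub H S F).edgeSet.ncard : ℝ)) /
          ((((F.verts ∩ S) \ R).ncard : ℝ) + ((F.verts \ S).ncard : ℝ)) := by
          rw [← hesplit, hncard]; push_cast; ring_nf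
      _ ≤ M := mediant_le _ _ _ _ M (Nat.cast_nonneg _) (Nat.cast_nonneg _) hdenpos h1 h2
  · -- 2-density part
    apply Real.sSup_le _ hM0
    rintro x ⟨F, hv3, rfl⟩
    set e₁ := (innerSub H S F).edgeSet.ncard with he₁def
    set e₂ := (outerSub H S F).edgeSet.ncard with he₂def
    set v₁ := (F.verts ∩ S).ncard with hv₁def
    set n₂ := (F.verts \ S).ncard with hn₂def
    have hvsplit : v₁ + n₂ = F.verts.ncard := Set.ncard_inter_add_ncard_diff_eq_ncard F.verts S
    have hesplit : e₁ + e₂ = F.edgeSet.ncard := edge_ncard_split H S F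
    by_cases hinner : e₁ = 0
    · -- F is a subgraph of removeWithin H S
      have hempty : (innerSub H S F).edgeSet = ∅ := by rwa [Set.ncard_eq_zero] at hinner
      have hno : ∀ u v : V, F.Adj u v → ¬(u ∈ S ∧ v ∈ S) := by
        intro u v hadj hc
        have : s(u, v) ∈ (innerSub H S F).edgeSet := by
          rw [SimpleGraph.Subgraph.mem_edgeSet]
          exact ⟨hadj, hc⟩
        rw [hempty] at this
        exact this
      set F' : (removeWithin H S).Subgraph :=
        { verts := F.verts
          Adj := F.Adj
          adj_sub := fun {u v} h => ⟨F.adj_sub h, hno u v h⟩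
          edge_vert := fun {u v} h => F.edge_vert h
          symm := ⟨fun u v h => F.adj_symm h⟩ } with hF'
      have hedge : F'.edgeSet = F.edgeSet := by
        ext e
        induction e with
        | h u v => rfl
      have hval := le_density2 (removeWithin H S) F' hv3
      rw [hedge] at hval
      exact le_trans hval hM2d
    · -- there is an inner edge, so v₁ ≥ 2
      have hv₁2 : 2 ≤ v₁ := by
        obtain ⟨e, he⟩ := Set.nonempty_of_ncard_ne_zero hinner
        induction e with
        | h u v =>
          rw [SimpleGraph.Subgraph.mem_edgeSet] at he
          obtain ⟨hadj, huS, hvS⟩ := he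
          have huv : u ≠ v := (F.adj_sub hadj).ne
          have : 1 < v₁ := by
            rw [hv₁def, Set.one_lt_ncard]
            exact ⟨u, ⟨F.edge_vert hadj, huS⟩, v, ⟨F.edge_vert (F.adj_symm hadj), hvS⟩, huv⟩
          omega
      -- Claim A : (e₁ : ℝ) - 1 ≤ M * ((v₁ : ℝ) - 2)
      have claimA : (e₁ : ℝ) - 1 ≤ M * ((v₁ : ℝ) - 2) := by
        by_cases hv₁3 : 3 ≤ v₁
        · have hval := le_density2 (inducedOn H S) (innerSub H S F) hv₁3
          have hverts : (innerSub H S F).verts = F.verts ∩ S := rfl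
          rw [hverts, ← hv₁def, ← he₁def] at hval
          have hpos : (0:ℝ) < (v₁ : ℝ) - 2 := by
            have : (3:ℝ) ≤ (v₁ : ℝ) := by exact_mod_cast hv₁3
            linarith
          rw [div_le_iff₀ hpos] at hval
          calc (e₁ : ℝ) - 1 ≤ density2 (inducedOn H S) * ((v₁ : ℝ) - 2) := hval
            _ ≤ M * ((v₁ : ℝ) - 2) := mul_le_mul_of_nonneg_right hM1d (le_of_lt hpos)
        · have hv₁2' : v₁ = 2 := by omega
          -- at most one inner edge
          obtain ⟨a, b, hab, hset⟩ := Set.ncard_eq_two.1 hv₁2'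
          have hsub : (innerSub H S F).edgeSet ⊆ {s(a, b)} := by
            intro e he
            induction e with
            | h u v =>
              rw [SimpleGraph.Subgraph.mem_edgeSet] at he
              obtain ⟨hadj, huS, hvS⟩ := he
              have hu : u ∈ ({a, b} : Set V) := hset ▸ ⟨F.edge_vert hadj, huS⟩
              have hv : v ∈ ({a, b} : Set V) := hset ▸ ⟨F.edge_vert (F.adj_symm hadj), hvS⟩
              have huv : u ≠ v := (F.adj_sub hadj).ne
              simp only [Set.mem_insert_iff, Set.mem_singleton_iff] at hu hv ⊢
              rcases hu with rfl | rfl <;> rcases hv with rfl | rfl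
              · exact absurd rfl huv
              · rfl
              · exact Sym2.eq_swap
              · exact absurd rfl huv
          have he₁le : e₁ ≤ 1 := by
            have := Set.ncard_le_ncard hsub (Set.toFinite _)
            rw [Set.ncard_singleton] at this
            exact this
          have he₁eq : e₁ = 1 := by omega
          rw [he₁eq, hv₁2']
          norm_num
      -- Claim B
      have claimB : (e₂ : ℝ) ≤ M * (n₂ : ℝ) := le_trans (outer_edge_le H S F)
        (mul_le_mul_of_nonneg_right hM2r (Nat.cast_nonneg _))
      have hvpos : (0:ℝ) < ((v₁ : ℝ) - 2) + (n₂ : ℝ) := by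
        have h3 : (3:ℝ) ≤ (F.verts.ncard : ℝ) := by exact_mod_cast hv3
        have : ((v₁ : ℝ) + (n₂ : ℝ)) = (F.verts.ncard : ℝ) := by exact_mod_cast hvsplit
        linarith
      have hv₁2r : (0:ℝ) ≤ (v₁ : ℝ) - 2 := by
        have : (2:ℝ) ≤ (v₁ : ℝ) := by exact_mod_cast hv₁2
        linarith
      calc ((F.edgeSet.ncard : ℝ) - 1) / ((F.verts.ncard : ℝ) - 2)
          = (((e₁ : ℝ) - 1) + (e₂ : ℝ)) / (((v₁ : ℝ) - 2) + (n₂ : ℝ)) := by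
            rw [← hesplit, ← hvsplit]; push_cast; ring_nf
        _ ≤ M := mediant_le _ _ _ _ M hv₁2r (Nat.cast_nonneg _) hvpos claimA claimB
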